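/- Kato-type inequality consequence: if T is a trace-free symmetric 2-tensor on an n-dimensional Riemannian manifold with totally symmetric covariant derivative, then |∇|T|²|² ≤ (4n/(n+2))·|T|²·|∇T|². In particular 4|T|²·|∇|T||² ≤ (4n/(n+2))|T|²|∇T|², hence |∇|T||² ≤ (n/(n+2))|∇T|² wherever T ≠ 0. -/

import Mathlib

open Finset

private def dlt {n : ℕ} (a b : Fin n) : ℝ := if a = b then 1 else 0

private lemma dsq {n : ℕ} : ∑ i : Fin n, ∑ j : Fin n, (dlt i j)^2 = n := by
  have h1 : ∀ i : Fin n, ∑ j : Fin n, (dlt i j)^2 = 1 := by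
    intro i; simp [dlt, sq]
  rw [Finset.sum_congr rfl fun i _ => h1 i, Finset.sum_const]
  simp


private lemma opBound {n : ℕ} (hn : 2 ≤ n) (t : Fin n → Fin n → ℝ)
    (ht : ∀ i j, t i j = t j i) (htr : ∑ i, t i i = 0) (u : Fin n → ℝ) :
    (n : ℝ) * (∑ i, (∑ j, t i j * u j)^2)
      ≤ ((n : ℝ) - 1) * (∑ i, ∑ j, (t i j)^2) * (∑ i, (u i)^2) := by
  set v : Fin n → ℝ := fun i => ∑ j, t i j * u j with hv
  set V : ℝ := ∑ i, (v i)^2 with hV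
  set U : ℝ := ∑ i, (u i)^2 with hU
  set A : ℝ := ∑ i, ∑ j, (t i j)^2 with hA
  set q : ℝ := ∑ i, u i * v i with hq
  have hnR : (0:ℝ) < n := by positivity
  have hn2 : (2:ℝ) ≤ n := by exact_mod_cast hn
  have hVpos : 0 ≤ V := Finset.sum_nonneg fun i _ => sq_nonneg _
  have hUpos : 0 ≤ U := Finset.sum_nonneg fun i _ => sq_nonneg _
  have hApos : 0 ≤ A := Finset.sum_nonneg fun i _ =>
    Finset.sum_nonneg fun j _ => sq_nonneg _
  have hvt : ∀ j, ∑ i, t i j * u i = v j := by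
    intro j
    rw [hv]
    exact Finset.sum_congr rfl fun i _ => by rw [ht]
  have hvd : ∀ i, ∑ j, t i j * u j = v i := fun i => rfl
  set c : ℝ := 2 * q / n with hc
  set g : Fin n → Fin n → ℝ :=
    fun i j => u i * v j + u j * v i - c * (if i = j then 1 else 0) with hg
  -- ⟨t, g⟩ = 2V
  have e1 : ∑ i, ∑ j, t i j * (u i * v j) = V := by
    rw [hV, Finset.sum_comm]
    refine Finset.sum_congr rfl fun j _ => ?_
    have h1 : ∑ i, t i j * (u i * v j) = (∑ i, t i j * u i) * v j := by
      rw [Finset.sum_mul]; exact Finset.sum_congr rfl fun i _ => by ring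
    rw [h1, hvt j, sq]
  have e2 : ∑ i, ∑ j, t i j * (u j * v i) = V := by
    rw [hV]
    refine Finset.sum_congr rfl fun i _ => ?_
    have h1 : ∑ j, t i j * (u j * v i) = (∑ j, t i j * u j) * v i := by
      rw [Finset.sum_mul]; exact Finset.sum_congr rfl fun j _ => by ring
    rw [h1, hvd i, sq]
  have e3 : ∑ i, ∑ j, t i j * (c * (if i = j then 1 else 0)) = 0 := by
    have h1 : ∀ i : Fin n, ∑ j, t i j * (c * (if i = j then 1 else 0)) = c * t i i := by
      intro i; simp [mul_comm]
    rw [Finset.sum_congr rfl fun i _ => h1 i, ← Finset.mul_sum, htr, mul_zero]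
  have htg : ∑ i, ∑ j, t i j * g i j = 2 * V := by
    have h1 : ∀ i j, t i j * g i j
        = t i j * (u i * v j) + t i j * (u j * v i)
          - t i j * (c * (if i = j then 1 else 0)) := by
      intro i j; rw [hg]; ring
    calc ∑ i, ∑ j, t i j * g i j
        = ∑ i, ∑ j, (t i j * (u i * v j) + t i j * (u j * v i)
            - t i j * (c * (if i = j then 1 else 0))) :=
          Finset.sum_congr rfl fun i _ => Finset.sum_congr rfl fun j _ => h1 i j
      _ = (∑ i, ∑ j, t i j * (u i * v j)) + (∑ i, ∑ j, t i j * (u j * v i))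
            - ∑ i, ∑ j, t i j * (c * (if i = j then 1 else 0)) := by
          simp [Finset.sum_add_distrib, Finset.sum_sub_distrib]
      _ = 2 * V := by rw [e1, e2, e3]; ring
  -- |g|² = 2UV + 2q² - 4q²/n
  have f1 : ∑ i, ∑ j, (u i * v j)^2 = U * V := by
    rw [hU, hV, Finset.sum_mul_sum]
    exact Finset.sum_congr rfl fun i _ => Finset.sum_congr rfl fun j _ => by ring
  have f2 : ∑ i, ∑ j, (u j * v i)^2 = U * V := by
    rw [Finset.sum_comm, hU, hV, Finset.sum_mul_sum]
    exact Finset.sum_congr rfl fun i _ => Finset.sum_congr rfl fun j _ => by ring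
  have f3 : ∑ i, ∑ j, (u i * v j) * (u j * v i) = q^2 := by
    rw [hq, sq, Finset.sum_mul_sum]
    exact Finset.sum_congr rfl fun i _ => Finset.sum_congr rfl fun j _ => by ring
  have f4 : ∑ i, ∑ j, (u i * v j) * (if i = j then (1:ℝ) else 0) = q := by
    rw [hq]
    refine Finset.sum_congr rfl fun i _ => ?_
    simp
  have f5 : ∑ i, ∑ j, (u j * v i) * (if i = j then (1:ℝ) else 0) = q := by
    rw [hq]
    refine Finset.sum_congr rfl fun i _ => ?_
    simp [mul_comm]
  have f6 : ∑ i : Fin n, ∑ j : Fin n, c^2 * (if i = j then (1:ℝ) else 0)^2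
      = c^2 * n := by
    have h1 : ∀ i : Fin n, ∑ j : Fin n, c^2 * (if i = j then (1:ℝ) else 0)^2 = c^2 := by
      intro i; simp [sq]
    rw [Finset.sum_congr rfl fun i _ => h1 i, Finset.sum_const]
    simp [mul_comm]
  have f3c : ∑ i : Fin n, ∑ j : Fin n, 2 * (u i * v j * (u j * v i)) = 2*q^2 := by
    simp only [← Finset.mul_sum]; rw [f3]
  have f4c : (∑ i : Fin n, ∑ j : Fin n, 2*c*(u i * v j * if i = j then (1:ℝ) else 0))
      = 2*c*q := by
    simp only [← Finset.mul_sum]; rw [f4]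
  have f5c : (∑ i : Fin n, ∑ j : Fin n, 2*c*(u j * v i * if i = j then (1:ℝ) else 0))
      = 2*c*q := by
    simp only [← Finset.mul_sum]; rw [f5]
  have hgg : ∑ i, ∑ j, (g i j)^2 = 2*U*V + 2*q^2 - c*(4*q) + c^2 * n := by
    have h1 : ∀ i j, (g i j)^2
        = (u i * v j)^2 + (u j * v i)^2 + c^2 * ((if i = j then (1:ℝ) else 0))^2
          + 2 * (u i * v j * (u j * v i))
          - 2*c * (u i * v j * if i = j then (1:ℝ) else 0)
          - 2*c * (u j * v i * if i = j then (1:ℝ) else 0) := by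
      intro i j; rw [hg]; by_cases h : i = j <;> simp [h] <;> ring
    calc ∑ i, ∑ j, (g i j)^2
        = ∑ i : Fin n, ∑ j : Fin n, ((u i * v j)^2 + (u j * v i)^2
            + c^2 * ((if i = j then (1:ℝ) else 0))^2
            + 2 * (u i * v j * (u j * v i))
            - 2*c * (u i * v j * if i = j then (1:ℝ) else 0)
            - 2*c * (u j * v i * if i = j then (1:ℝ) else 0)) :=
          Finset.sum_congr rfl fun i _ => Finset.sum_congr rfl fun j _ => h1 i j
      _ = (∑ i : Fin n, ∑ j : Fin n, (u i * v j)^2)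
            + (∑ i : Fin n, ∑ j : Fin n, (u j * v i)^2)
            + (∑ i : Fin n, ∑ j : Fin n, c^2 * ((if i = j then (1:ℝ) else 0))^2)
            + (∑ i : Fin n, ∑ j : Fin n, 2 * (u i * v j * (u j * v i)))
            - (∑ i : Fin n, ∑ j : Fin n, 2*c * (u i * v j * if i = j then (1:ℝ) else 0))
            - (∑ i : Fin n, ∑ j : Fin n, 2*c * (u j * v i * if i = j then (1:ℝ) else 0)) := by
          simp only [Finset.sum_add_distrib, Finset.sum_sub_distrib]
      _ = 2*U*V + 2*q^2 - c*(4*q) + c^2 * n := by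
          rw [f1, f2, f6, f3c, f4c, f5c]; ring
  -- Cauchy-Schwarz
  have hcs : (∑ i, ∑ j, t i j * g i j)^2
      ≤ A * (∑ i, ∑ j, (g i j)^2) := by
    rw [hA]
    have := Finset.sum_mul_sq_le_sq_mul_sq Finset.univ
      (fun p : Fin n × Fin n => t p.1 p.2) (fun p : Fin n × Fin n => g p.1 p.2)
    simpa [Fintype.sum_prod_type] using this
  rw [htg, hgg] at hcs
  -- q² ≤ U V
  have hqUV : q^2 ≤ U * V := by
    rw [hq, hU, hV]
    have := Finset.sum_mul_sq_le_sq_mul_sq Finset.univ u v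
    simpa using this
  have hne : (n:ℝ) ≠ 0 := ne_of_gt hnR
  have h3 : (0:ℝ) ≤ 2*(n:ℝ) - 4 := by linarith
  have s1 : (n:ℝ) * (2*V)^2 ≤ A * (2*n*U*V + (2*n-4)*q^2) := by
    calc (n:ℝ)*(2*V)^2 ≤ n * (A * (2*U*V + 2*q^2 - c*(4*q) + c^2*n)) :=
          mul_le_mul_of_nonneg_left hcs (le_of_lt hnR)
      _ = A * (2*n*U*V + 2*n*q^2 - n*(c*(4*q)) + n*(c^2*n)) := by ring
      _ = A * (2*n*U*V + (2*n-4)*q^2) := by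
          rw [hc]; field_simp; ring
  have s3 : (n:ℝ) * (2*V)^2 ≤ (4*n-4)*(A*U*V) := by
    calc (n:ℝ)*(2*V)^2 ≤ A * (2*n*U*V + (2*n-4)*q^2) := s1
      _ ≤ A * (2*n*U*V + (2*n-4)*(U*V)) := by
          apply mul_le_mul_of_nonneg_left _ hApos
          have := mul_le_mul_of_nonneg_left hqUV h3
          linarith
      _ = (4*n-4)*(A*U*V) := by ring
  have key : (n:ℝ) * V^2 ≤ ((n:ℝ)-1)*A*U*V := by
    have e1' : ((n:ℝ)-1)*A*U*V = (1/4)*((4*n-4)*(A*U*V)) := by ring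
    have e2' : (n:ℝ)*V^2 = (1/4)*((n:ℝ)*(2*V)^2) := by ring
    rw [e1', e2']
    linarith
  rcases eq_or_lt_of_le hVpos with hV0 | hV0
  · rw [← hV0, mul_zero]
    exact mul_nonneg (mul_nonneg (by linarith) hApos) hUpos
  · refine (mul_le_mul_iff_of_pos_right hV0).mp ?_
    calc (n:ℝ)*V*V = n*V^2 := by ring
      _ ≤ ((n:ℝ)-1)*A*U*V := key

section core
variable {n : ℕ}

private lemma comm2 (F : Fin n → Fin n → Fin n → ℝ) :
    ∑ k, ∑ i, ∑ j, F k i j = ∑ i, ∑ k, ∑ j, F k i j := Finset.sum_comm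

private lemma comm3 (F : Fin n → Fin n → Fin n → ℝ) :
    ∑ k, ∑ i, ∑ j, F k i j = ∑ j, ∑ k, ∑ i, F k i j := by
  have h1 : ∀ k, ∑ i, ∑ j, F k i j = ∑ j, ∑ i, F k i j := fun k => Finset.sum_comm
  rw [Finset.sum_congr rfl fun k _ => h1 k, Finset.sum_comm]

private lemma core (hn2 : 2 ≤ n) (t : Fin n → Fin n → ℝ)
    (s : Fin n → Fin n → Fin n → ℝ)
    (ht : ∀ i j, t i j = t j i) (htr : ∑ i, t i i = 0)
    (hs1 : ∀ k i j, s k i j = s k j i) (hs2 : ∀ k i j, s k i j = s i k j)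
    (hstr : ∀ k, ∑ i : Fin n, s k i i = 0) :
    ∑ k, (∑ i, ∑ j, t i j * s k i j)^2
      ≤ ((n:ℝ)/((n:ℝ)+2)) * (∑ i, ∑ j, (t i j)^2)
          * (∑ k, ∑ i, ∑ j, (s k i j)^2) := by
  have hnR : (0:ℝ) < n := by positivity
  have hn2R : (2:ℝ) ≤ n := by exact_mod_cast hn2
  set w : Fin n → ℝ := fun k => ∑ i, ∑ j, t i j * s k i j with hw
  set m : Fin n → ℝ := fun k => ∑ j, t k j * w j with hm
  set W : ℝ := ∑ k, (w k)^2 with hW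
  set A : ℝ := ∑ i, ∑ j, (t i j)^2 with hA
  set S : ℝ := ∑ k, ∑ i, ∑ j, (s k i j)^2 with hS
  set M : ℝ := ∑ k, (m k)^2 with hM
  have hWpos : 0 ≤ W := Finset.sum_nonneg fun i _ => sq_nonneg _
  have hApos : 0 ≤ A := Finset.sum_nonneg fun i _ =>
    Finset.sum_nonneg fun j _ => sq_nonneg _
  have hSpos : 0 ≤ S := Finset.sum_nonneg fun k _ => Finset.sum_nonneg fun i _ =>
    Finset.sum_nonneg fun j _ => sq_nonneg _
  have hMpos : 0 ≤ M := Finset.sum_nonneg fun i _ => sq_nonneg _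
  -- full symmetry
  have hs3 : ∀ k i j, s k i j = s j k i := fun k i j =>
    (hs2 k i j).trans ((hs1 i k j).trans ((hs2 i j k).trans (hs1 j i k)))
  -- traces
  have hstr1 : ∀ j, ∑ k : Fin n, s k k j = 0 := by
    intro j
    rw [Finset.sum_congr rfl fun k _ => hs3 k k j]
    exact hstr j
  have hstr2 : ∀ i, ∑ k : Fin n, s k i k = 0 := by
    intro i
    rw [Finset.sum_congr rfl fun k _ => hs2 k i k]
    exact hstr i
  -- transposed m
  have hmt : ∀ j, ∑ i, t i j * w i = m j := by
    intro j; rw [hm]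
    exact Finset.sum_congr rfl fun i _ => by rw [ht]
  have hmd : ∀ k, ∑ j, t k j * w j = m k := fun k => rfl
  -- w variants
  have hw1 : ∀ k, ∑ i, ∑ j, t i j * s k i j = w k := fun k => rfl
  have hw2 : ∀ i, ∑ k, ∑ j, t k j * s k i j = w i := by
    intro i
    exact Finset.sum_congr rfl fun k _ => Finset.sum_congr rfl fun j _ => by
      rw [hs2]
  have hw3 : ∀ j, ∑ k, ∑ i, t k i * s k i j = w j := by
    intro j
    exact Finset.sum_congr rfl fun k _ => Finset.sum_congr rfl fun i _ => by
      rw [hs3 k i j]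
  set c : ℝ := 2/((n:ℝ)+2) with hc
  -- ⟨s, X⟩ pieces
  have I1 : ∑ k, ∑ i, ∑ j, s k i j * (w k * t i j) = W := by
    rw [hW]
    refine Finset.sum_congr rfl fun k _ => ?_
    have h1 : ∑ i, ∑ j, s k i j * (w k * t i j)
        = w k * ∑ i, ∑ j, t i j * s k i j := by
      rw [Finset.mul_sum]
      refine Finset.sum_congr rfl fun i _ => ?_
      rw [Finset.mul_sum]
      exact Finset.sum_congr rfl fun j _ => by ring
    rw [h1, hw1, sq]
  have I2 : ∑ k, ∑ i, ∑ j, s k i j * (w i * t k j) = W := by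
    rw [comm2, hW]
    refine Finset.sum_congr rfl fun i _ => ?_
    have h1 : ∑ k, ∑ j, s k i j * (w i * t k j)
        = w i * ∑ k, ∑ j, t k j * s k i j := by
      rw [Finset.mul_sum]
      refine Finset.sum_congr rfl fun k _ => ?_
      rw [Finset.mul_sum]
      exact Finset.sum_congr rfl fun j _ => by ring
    rw [h1, hw2, sq]
  have I3 : ∑ k, ∑ i, ∑ j, s k i j * (w j * t k i) = W := by
    rw [comm3, hW]
    refine Finset.sum_congr rfl fun j _ => ?_
    have h1 : ∑ k, ∑ i, s k i j * (w j * t k i)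
        = w j * ∑ k, ∑ i, t k i * s k i j := by
      rw [Finset.mul_sum]
      refine Finset.sum_congr rfl fun k _ => ?_
      rw [Finset.mul_sum]
      exact Finset.sum_congr rfl fun i _ => by ring
    rw [h1, hw3, sq]
  -- ⟨s, Y⟩ pieces vanish
  have IY1 : ∑ k, ∑ i, ∑ j, s k i j * (dlt k i * m j) = 0 := by
    have h1 : ∀ k, ∑ i, ∑ j, s k i j * (dlt k i * m j) = ∑ j, s k k j * m j := by
      intro k
      have h2 : ∀ i, ∑ j, s k i j * (dlt k i * m j)
          = dlt k i * ∑ j, s k i j * m j := by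
        intro i
        rw [Finset.mul_sum]
        exact Finset.sum_congr rfl fun j _ => by ring
      rw [Finset.sum_congr rfl fun i _ => h2 i]
      simp [dlt]
    rw [Finset.sum_congr rfl fun k _ => h1 k, Finset.sum_comm]
    have h3 : ∀ j, ∑ k, s k k j * m j = 0 := by
      intro j
      rw [← Finset.sum_mul, hstr1, zero_mul]
    rw [Finset.sum_congr rfl fun j _ => h3 j, Finset.sum_const, smul_zero]
  have IY2 : ∑ k, ∑ i, ∑ j, s k i j * (dlt k j * m i) = 0 := by
    have h1 : ∀ k, ∑ i, ∑ j, s k i j * (dlt k j * m i) = ∑ i, s k i k * m i := by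
      intro k
      refine Finset.sum_congr rfl fun i _ => ?_
      simp [dlt]
    rw [Finset.sum_congr rfl fun k _ => h1 k, Finset.sum_comm]
    have h3 : ∀ i, ∑ k, s k i k * m i = 0 := by
      intro i
      rw [← Finset.sum_mul, hstr2, zero_mul]
    rw [Finset.sum_congr rfl fun i _ => h3 i, Finset.sum_const, smul_zero]
  have IY3 : ∑ k, ∑ i, ∑ j, s k i j * (dlt i j * m k) = 0 := by
    have h1 : ∀ k, ∑ i, ∑ j, s k i j * (dlt i j * m k) = m k * ∑ i, s k i i := by
      intro k
      rw [Finset.mul_sum]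
      refine Finset.sum_congr rfl fun i _ => ?_
      simp [dlt, mul_comm]
    rw [Finset.sum_congr rfl fun k _ => h1 k]
    have h3 : ∀ k, m k * ∑ i, s k i i = 0 := fun k => by rw [hstr, mul_zero]
    rw [Finset.sum_congr rfl fun k _ => h3 k, Finset.sum_const, smul_zero]
  -- |X|² pieces
  have A1 : ∑ k, ∑ i, ∑ j, (w k * t i j)^2 = W * A := by
    rw [hW, Finset.sum_mul]
    refine Finset.sum_congr rfl fun k _ => ?_
    rw [hA, Finset.mul_sum]
    refine Finset.sum_congr rfl fun i _ => ?_
    rw [Finset.mul_sum]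
    exact Finset.sum_congr rfl fun j _ => by ring
  have A2 : ∑ k, ∑ i, ∑ j, (w i * t k j)^2 = W * A := by
    rw [comm2, hW, Finset.sum_mul]
    refine Finset.sum_congr rfl fun i _ => ?_
    rw [hA, Finset.mul_sum]
    refine Finset.sum_congr rfl fun k _ => ?_
    rw [Finset.mul_sum]
    exact Finset.sum_congr rfl fun j _ => by ring
  have A3 : ∑ k, ∑ i, ∑ j, (w j * t k i)^2 = W * A := by
    rw [comm3, hW, Finset.sum_mul]
    refine Finset.sum_congr rfl fun j _ => ?_
    rw [hA, Finset.mul_sum]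
    refine Finset.sum_congr rfl fun k _ => ?_
    rw [Finset.mul_sum]
    exact Finset.sum_congr rfl fun i _ => by ring
  have A4 : ∑ k, ∑ i, ∑ j, 2*((w k * t i j)*(w i * t k j)) = 2*M := by
    rw [comm3]
    have h1 : ∀ j, ∑ k, ∑ i, 2*((w k * t i j)*(w i * t k j)) = 2*(m j)^2 := by
      intro j
      have h2 : ∀ k, ∑ i, 2*((w k * t i j)*(w i * t k j))
          = (2 * (w k * t k j)) * ∑ i, t i j * w i := by
        intro k
        rw [Finset.mul_sum]
        exact Finset.sum_congr rfl fun i _ => by ring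
      rw [Finset.sum_congr rfl fun k _ => h2 k]
      have h3 : ∀ k, (2 * (w k * t k j)) * ∑ i, t i j * w i
          = (2 * m j) * (t k j * w k) := by
        intro k; rw [hmt j]; ring
      rw [Finset.sum_congr rfl fun k _ => h3 k, ← Finset.mul_sum, hmt j]
      ring
    rw [Finset.sum_congr rfl fun j _ => h1 j, hM, Finset.mul_sum]
  have A5 : ∑ k, ∑ i, ∑ j, 2*((w k * t i j)*(w j * t k i)) = 2*M := by
    rw [comm2]
    have h1 : ∀ i, ∑ k, ∑ j, 2*((w k * t i j)*(w j * t k i)) = 2*(m i)^2 := by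
      intro i
      have h2 : ∀ k, ∑ j, 2*((w k * t i j)*(w j * t k i))
          = (2 * (w k * t k i)) * ∑ j, t i j * w j := by
        intro k
        rw [Finset.mul_sum]
        exact Finset.sum_congr rfl fun j _ => by ring
      rw [Finset.sum_congr rfl fun k _ => h2 k]
      have h3 : ∀ k, (2 * (w k * t k i)) * ∑ j, t i j * w j
          = (2 * m i) * (t k i * w k) := by
        intro k; rw [hmd i]; ring
      rw [Finset.sum_congr rfl fun k _ => h3 k, ← Finset.mul_sum, hmt i]
      ring
    rw [Finset.sum_congr rfl fun i _ => h1 i, hM, Finset.mul_sum]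
  have A6 : ∑ k, ∑ i, ∑ j, 2*((w i * t k j)*(w j * t k i)) = 2*M := by
    have h1 : ∀ k, ∑ i, ∑ j, 2*((w i * t k j)*(w j * t k i)) = 2*(m k)^2 := by
      intro k
      have h2 : ∀ i, ∑ j, 2*((w i * t k j)*(w j * t k i))
          = (2 * (w i * t k i)) * ∑ j, t k j * w j := by
        intro i
        rw [Finset.mul_sum]
        exact Finset.sum_congr rfl fun j _ => by ring
      rw [Finset.sum_congr rfl fun i _ => h2 i]
      have h3 : ∀ i, (2 * (w i * t k i)) * ∑ j, t k j * w j
          = (2 * m k) * (t k i * w i) := by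
        intro i; rw [hmd k]; ring
      rw [Finset.sum_congr rfl fun i _ => h3 i, ← Finset.mul_sum, hmd k]
      ring
    rw [Finset.sum_congr rfl fun k _ => h1 k, hM, Finset.mul_sum]
  -- |Y|² pieces
  have B1 : ∑ k : Fin n, ∑ i : Fin n, ∑ j : Fin n, (dlt k i * m j)^2 = (n:ℝ)*M := by
    have h1 : ∀ k, ∑ i : Fin n, ∑ j : Fin n, (dlt k i * m j)^2 = M := by
      intro k
      have h2 : ∀ i, ∑ j : Fin n, (dlt k i * m j)^2 = (dlt k i)^2 * M := by
        intro i
        rw [hM, Finset.mul_sum]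
        exact Finset.sum_congr rfl fun j _ => by ring
      rw [Finset.sum_congr rfl fun i _ => h2 i]
      simp [dlt]
    rw [Finset.sum_congr rfl fun k _ => h1 k, Finset.sum_const]
    simp [mul_comm]
  have B2 : ∑ k : Fin n, ∑ i : Fin n, ∑ j : Fin n, (dlt k j * m i)^2 = (n:ℝ)*M := by
    have h1 : ∀ k, ∑ i : Fin n, ∑ j : Fin n, (dlt k j * m i)^2 = M := by
      intro k
      rw [hM]
      refine Finset.sum_congr rfl fun i _ => ?_
      simp [dlt, sq]
    rw [Finset.sum_congr rfl fun k _ => h1 k, Finset.sum_const]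
    simp [mul_comm]
  have B3 : ∑ k : Fin n, ∑ i : Fin n, ∑ j : Fin n, (dlt i j * m k)^2 = (n:ℝ)*M := by
    have h1 : ∀ k, ∑ i : Fin n, ∑ j : Fin n, (dlt i j * m k)^2 = (n:ℝ) * (m k)^2 := by
      intro k
      have h2 : ∑ i : Fin n, ∑ j : Fin n, (dlt i j * m k)^2
          = (m k)^2 * ∑ i : Fin n, ∑ j : Fin n, (dlt i j)^2 := by
        rw [Finset.mul_sum]
        refine Finset.sum_congr rfl fun i _ => ?_
        rw [Finset.mul_sum]
        exact Finset.sum_congr rfl fun j _ => by ring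
      rw [h2, dsq]; ring
    rw [Finset.sum_congr rfl fun k _ => h1 k, ← Finset.mul_sum, hM]
  have B4 : ∑ k : Fin n, ∑ i : Fin n, ∑ j : Fin n, 2*((dlt k i * m j)*(dlt k j * m i)) = 2*M := by
    have h1 : ∀ k, ∑ i : Fin n, ∑ j : Fin n, 2*((dlt k i * m j)*(dlt k j * m i)) = 2*(m k)^2 := by
      intro k
      simp [dlt, sq, mul_comm]
    rw [Finset.sum_congr rfl fun k _ => h1 k, hM, Finset.mul_sum]
  have B5 : ∑ k : Fin n, ∑ i : Fin n, ∑ j : Fin n, 2*((dlt k i * m j)*(dlt i j * m k)) = 2*M := by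
    have h1 : ∀ k, ∑ i : Fin n, ∑ j : Fin n, 2*((dlt k i * m j)*(dlt i j * m k)) = 2*(m k)^2 := by
      intro k
      simp [dlt, sq, mul_comm]
    rw [Finset.sum_congr rfl fun k _ => h1 k, hM, Finset.mul_sum]
  have B6 : ∑ k : Fin n, ∑ i : Fin n, ∑ j : Fin n, 2*((dlt k j * m i)*(dlt i j * m k)) = 2*M := by
    have h1 : ∀ k, ∑ i : Fin n, ∑ j : Fin n, 2*((dlt k j * m i)*(dlt i j * m k)) = 2*(m k)^2 := by
      intro k
      simp [dlt, sq, mul_comm]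
    rw [Finset.sum_congr rfl fun k _ => h1 k, hM, Finset.mul_sum]
  -- mixed X·Y pieces
  have C11 : ∑ k, ∑ i, ∑ j, (w k * t i j)*(dlt k i * m j) = M := by
    have h1 : ∀ k, ∑ i, ∑ j, (w k * t i j)*(dlt k i * m j)
        = ∑ j, w k * (t k j * m j) := by
      intro k
      have h2 : ∀ i, ∑ j, (w k * t i j)*(dlt k i * m j)
          = dlt k i * ∑ j, w k * (t i j * m j) := by
        intro i; rw [Finset.mul_sum]
        exact Finset.sum_congr rfl fun j _ => by ring
      rw [Finset.sum_congr rfl fun i _ => h2 i]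
      simp [dlt]
    rw [Finset.sum_congr rfl fun k _ => h1 k, Finset.sum_comm, hM]
    refine Finset.sum_congr rfl fun j _ => ?_
    have h3 : ∑ k, w k * (t k j * m j) = m j * ∑ k, t k j * w k := by
      rw [Finset.mul_sum]; exact Finset.sum_congr rfl fun k _ => by ring
    rw [h3, hmt j, sq]
  have C12 : ∑ k, ∑ i, ∑ j, (w k * t i j)*(dlt k j * m i) = M := by
    have h1 : ∀ k, ∑ i, ∑ j, (w k * t i j)*(dlt k j * m i)
        = ∑ i, w k * (t i k * m i) := by
      intro k
      refine Finset.sum_congr rfl fun i _ => ?_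
      have h2 : ∀ j, (w k * t i j)*(dlt k j * m i)
          = dlt k j * (w k * (t i j * m i)) := fun j => by ring
      rw [Finset.sum_congr rfl fun j _ => h2 j]
      simp [dlt]
    rw [Finset.sum_congr rfl fun k _ => h1 k, Finset.sum_comm, hM]
    refine Finset.sum_congr rfl fun i _ => ?_
    have h3 : ∑ k, w k * (t i k * m i) = m i * ∑ k, t i k * w k := by
      rw [Finset.mul_sum]; exact Finset.sum_congr rfl fun k _ => by ring
    rw [h3, hmd i, sq]
  have C13 : ∑ k, ∑ i, ∑ j, (w k * t i j)*(dlt i j * m k) = 0 := by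
    have h1 : ∀ k, ∑ i, ∑ j, (w k * t i j)*(dlt i j * m k)
        = (w k * m k) * ∑ i, t i i := by
      intro k
      rw [Finset.mul_sum]
      refine Finset.sum_congr rfl fun i _ => ?_
      have h2 : ∀ j, (w k * t i j)*(dlt i j * m k)
          = dlt i j * (w k * (t i j * m k)) := fun j => by ring
      rw [Finset.sum_congr rfl fun j _ => h2 j]
      simp [dlt]
      ring
    have h3 : ∀ k, (w k * m k) * ∑ i, t i i = 0 := fun k => by rw [htr, mul_zero]
    rw [Finset.sum_congr rfl fun k _ => h1 k,
      Finset.sum_congr rfl fun k _ => h3 k, Finset.sum_const, smul_zero]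
  have C21 : ∑ k, ∑ i, ∑ j, (w i * t k j)*(dlt k i * m j) = M := by
    have h1 : ∀ k, ∑ i, ∑ j, (w i * t k j)*(dlt k i * m j)
        = ∑ j, w k * (t k j * m j) := by
      intro k
      have h2 : ∀ i, ∑ j, (w i * t k j)*(dlt k i * m j)
          = dlt k i * ∑ j, w i * (t k j * m j) := by
        intro i; rw [Finset.mul_sum]
        exact Finset.sum_congr rfl fun j _ => by ring
      rw [Finset.sum_congr rfl fun i _ => h2 i]
      simp [dlt]
    rw [Finset.sum_congr rfl fun k _ => h1 k, Finset.sum_comm, hM]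
    refine Finset.sum_congr rfl fun j _ => ?_
    have h3 : ∑ k, w k * (t k j * m j) = m j * ∑ k, t k j * w k := by
      rw [Finset.mul_sum]; exact Finset.sum_congr rfl fun k _ => by ring
    rw [h3, hmt j, sq]
  have C22 : ∑ k, ∑ i, ∑ j, (w i * t k j)*(dlt k j * m i) = 0 := by
    have h1 : ∀ k, ∑ i, ∑ j, (w i * t k j)*(dlt k j * m i)
        = t k k * ∑ i, w i * m i := by
      intro k
      rw [Finset.mul_sum]
      refine Finset.sum_congr rfl fun i _ => ?_
      have h2 : ∀ j, (w i * t k j)*(dlt k j * m i)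
          = dlt k j * (w i * (t k j * m i)) := fun j => by ring
      rw [Finset.sum_congr rfl fun j _ => h2 j]
      simp [dlt]
      ring
    rw [Finset.sum_congr rfl fun k _ => h1 k, ← Finset.sum_mul, htr, zero_mul]
  have C23 : ∑ k, ∑ i, ∑ j, (w i * t k j)*(dlt i j * m k) = M := by
    have h1 : ∀ k, ∑ i, ∑ j, (w i * t k j)*(dlt i j * m k)
        = m k * ∑ i, t k i * w i := by
      intro k
      rw [Finset.mul_sum]
      refine Finset.sum_congr rfl fun i _ => ?_
      have h2 : ∀ j, (w i * t k j)*(dlt i j * m k)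
          = dlt i j * (m k * (t k j * w i)) := fun j => by ring
      rw [Finset.sum_congr rfl fun j _ => h2 j]
      simp [dlt]
    rw [Finset.sum_congr rfl fun k _ => h1 k, hM]
    refine Finset.sum_congr rfl fun k _ => ?_
    rw [hmd k, sq]
  have C31 : ∑ k, ∑ i, ∑ j, (w j * t k i)*(dlt k i * m j) = 0 := by
    have h1 : ∀ k, ∑ i, ∑ j, (w j * t k i)*(dlt k i * m j)
        = t k k * ∑ j, w j * m j := by
      intro k
      have h2 : ∀ i, ∑ j, (w j * t k i)*(dlt k i * m j)
          = dlt k i * ∑ j, w j * (t k i * m j) := by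
        intro i; rw [Finset.mul_sum]
        exact Finset.sum_congr rfl fun j _ => by ring
      rw [Finset.sum_congr rfl fun i _ => h2 i]
      simp [dlt]
      rw [Finset.mul_sum]
      exact Finset.sum_congr rfl fun j _ => by ring
    rw [Finset.sum_congr rfl fun k _ => h1 k, ← Finset.sum_mul, htr, zero_mul]
  have C32 : ∑ k, ∑ i, ∑ j, (w j * t k i)*(dlt k j * m i) = M := by
    have h1 : ∀ k, ∑ i, ∑ j, (w j * t k i)*(dlt k j * m i)
        = ∑ i, w k * (t k i * m i) := by
      intro k
      refine Finset.sum_congr rfl fun i _ => ?_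
      have h2 : ∀ j, (w j * t k i)*(dlt k j * m i)
          = dlt k j * (w j * (t k i * m i)) := fun j => by ring
      rw [Finset.sum_congr rfl fun j _ => h2 j]
      simp [dlt]
    rw [Finset.sum_congr rfl fun k _ => h1 k, Finset.sum_comm, hM]
    refine Finset.sum_congr rfl fun i _ => ?_
    have h3 : ∑ k, w k * (t k i * m i) = m i * ∑ k, t k i * w k := by
      rw [Finset.mul_sum]; exact Finset.sum_congr rfl fun k _ => by ring
    rw [h3, hmt i, sq]
  have C33 : ∑ k, ∑ i, ∑ j, (w j * t k i)*(dlt i j * m k) = M := by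
    have h1 : ∀ k, ∑ i, ∑ j, (w j * t k i)*(dlt i j * m k)
        = m k * ∑ i, t k i * w i := by
      intro k
      rw [Finset.mul_sum]
      refine Finset.sum_congr rfl fun i _ => ?_
      have h2 : ∀ j, (w j * t k i)*(dlt i j * m k)
          = dlt i j * (m k * (t k i * w j)) := fun j => by ring
      rw [Finset.sum_congr rfl fun j _ => h2 j]
      simp [dlt]
    rw [Finset.sum_congr rfl fun k _ => h1 k, hM]
    refine Finset.sum_congr rfl fun k _ => ?_
    rw [hmd k, sq]
  have pull3 : ∀ (a : ℝ) (F : Fin n → Fin n → Fin n → ℝ),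
      ∑ k, ∑ i, ∑ j, a * F k i j = a * ∑ k, ∑ i, ∑ j, F k i j := by
    intro a F; simp [Finset.mul_sum]
  -- ⟨s, G⟩ = 3W
  have hSG : ∑ k, ∑ i, ∑ j, s k i j *
      ((w k * t i j + w i * t k j + w j * t k i)
        - c * (dlt k i * m j + dlt k j * m i + dlt i j * m k)) = 3*W := by
    have hpt : ∀ k i j, s k i j *
        ((w k * t i j + w i * t k j + w j * t k i)
          - c * (dlt k i * m j + dlt k j * m i + dlt i j * m k))
        = (s k i j * (w k * t i j) + s k i j * (w i * t k j)
            + s k i j * (w j * t k i))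
          - c * (s k i j * (dlt k i * m j) + s k i j * (dlt k j * m i)
            + s k i j * (dlt i j * m k)) := by
      intro k i j; ring
    calc ∑ k, ∑ i, ∑ j, s k i j *
        ((w k * t i j + w i * t k j + w j * t k i)
          - c * (dlt k i * m j + dlt k j * m i + dlt i j * m k))
        = ∑ k, ∑ i, ∑ j, ((s k i j * (w k * t i j) + s k i j * (w i * t k j)
            + s k i j * (w j * t k i))
          - (c * (s k i j * (dlt k i * m j) + s k i j * (dlt k j * m i)
            + s k i j * (dlt i j * m k)))) := by
          refine Finset.sum_congr rfl fun k _ => Finset.sum_congr rfl fun i _ =>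
            Finset.sum_congr rfl fun j _ => by rw [hpt]
      _ = ((∑ k, ∑ i, ∑ j, s k i j * (w k * t i j))
            + (∑ k, ∑ i, ∑ j, s k i j * (w i * t k j))
            + (∑ k, ∑ i, ∑ j, s k i j * (w j * t k i)))
          - ∑ k, ∑ i, ∑ j, (c * (s k i j * (dlt k i * m j)
              + s k i j * (dlt k j * m i) + s k i j * (dlt i j * m k))) := by
          simp only [Finset.sum_add_distrib, Finset.sum_sub_distrib]
      _ = 3*W - c * ((∑ k, ∑ i, ∑ j, s k i j * (dlt k i * m j))
            + (∑ k, ∑ i, ∑ j, s k i j * (dlt k j * m i))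
            + (∑ k, ∑ i, ∑ j, s k i j * (dlt i j * m k))) := by
          rw [pull3, I1, I2, I3]
          simp only [Finset.sum_add_distrib]
          ring
      _ = 3*W := by rw [IY1, IY2, IY3]; ring
  -- |G|²
  have hGG : ∑ k, ∑ i, ∑ j,
      ((w k * t i j + w i * t k j + w j * t k i)
        - c * (dlt k i * m j + dlt k j * m i + dlt i j * m k))^2
      = 3*(W*A) + 6*M + c^2*(3*(n:ℝ)*M + 6*M) - 2*c*(6*M) := by
    have hpt : ∀ k i j,
        ((w k * t i j + w i * t k j + w j * t k i)
          - c * (dlt k i * m j + dlt k j * m i + dlt i j * m k))^2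
        = ((w k * t i j)^2 + (w i * t k j)^2 + (w j * t k i)^2
            + 2*((w k * t i j)*(w i * t k j)) + 2*((w k * t i j)*(w j * t k i))
            + 2*((w i * t k j)*(w j * t k i)))
          + c^2 * ((dlt k i * m j)^2 + (dlt k j * m i)^2 + (dlt i j * m k)^2
            + 2*((dlt k i * m j)*(dlt k j * m i))
            + 2*((dlt k i * m j)*(dlt i j * m k))
            + 2*((dlt k j * m i)*(dlt i j * m k)))
          - 2*c * ((w k * t i j)*(dlt k i * m j) + (w k * t i j)*(dlt k j * m i)
            + (w k * t i j)*(dlt i j * m k) + (w i * t k j)*(dlt k i * m j)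
            + (w i * t k j)*(dlt k j * m i) + (w i * t k j)*(dlt i j * m k)
            + (w j * t k i)*(dlt k i * m j) + (w j * t k i)*(dlt k j * m i)
            + (w j * t k i)*(dlt i j * m k)) := by
      intro k i j; ring
    calc ∑ k, ∑ i, ∑ j,
        ((w k * t i j + w i * t k j + w j * t k i)
          - c * (dlt k i * m j + dlt k j * m i + dlt i j * m k))^2
        = ∑ k, ∑ i, ∑ j,
          (((w k * t i j)^2 + (w i * t k j)^2 + (w j * t k i)^2
            + 2*((w k * t i j)*(w i * t k j)) + 2*((w k * t i j)*(w j * t k i))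
            + 2*((w i * t k j)*(w j * t k i)))
          + (c^2 * ((dlt k i * m j)^2 + (dlt k j * m i)^2 + (dlt i j * m k)^2
            + 2*((dlt k i * m j)*(dlt k j * m i))
            + 2*((dlt k i * m j)*(dlt i j * m k))
            + 2*((dlt k j * m i)*(dlt i j * m k))))
          - (2*c * ((w k * t i j)*(dlt k i * m j) + (w k * t i j)*(dlt k j * m i)
            + (w k * t i j)*(dlt i j * m k) + (w i * t k j)*(dlt k i * m j)
            + (w i * t k j)*(dlt k j * m i) + (w i * t k j)*(dlt i j * m k)
            + (w j * t k i)*(dlt k i * m j) + (w j * t k i)*(dlt k j * m i)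
            + (w j * t k i)*(dlt i j * m k)))) := by
          refine Finset.sum_congr rfl fun k _ => Finset.sum_congr rfl fun i _ =>
            Finset.sum_congr rfl fun j _ => by rw [hpt]
      _ = (∑ k, ∑ i, ∑ j, ((w k * t i j)^2 + (w i * t k j)^2 + (w j * t k i)^2
            + 2*((w k * t i j)*(w i * t k j)) + 2*((w k * t i j)*(w j * t k i))
            + 2*((w i * t k j)*(w j * t k i))))
          + (∑ k, ∑ i, ∑ j, (c^2 * ((dlt k i * m j)^2 + (dlt k j * m i)^2
            + (dlt i j * m k)^2
            + 2*((dlt k i * m j)*(dlt k j * m i))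
            + 2*((dlt k i * m j)*(dlt i j * m k))
            + 2*((dlt k j * m i)*(dlt i j * m k)))))
          - (∑ k, ∑ i, ∑ j, (2*c * ((w k * t i j)*(dlt k i * m j)
            + (w k * t i j)*(dlt k j * m i)
            + (w k * t i j)*(dlt i j * m k) + (w i * t k j)*(dlt k i * m j)
            + (w i * t k j)*(dlt k j * m i) + (w i * t k j)*(dlt i j * m k)
            + (w j * t k i)*(dlt k i * m j) + (w j * t k i)*(dlt k j * m i)
            + (w j * t k i)*(dlt i j * m k)))) := by
          simp only [Finset.sum_add_distrib, Finset.sum_sub_distrib]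
      _ = 3*(W*A) + 6*M + c^2*(3*(n:ℝ)*M + 6*M) - 2*c*(6*M) := by
          rw [pull3, pull3]
          simp only [Finset.sum_add_distrib]
          rw [A1, A2, A3, A4, A5, A6, B1, B2, B3, B4, B5, B6,
            C11, C12, C13, C21, C22, C23, C31, C32, C33]
          ring
  -- Cauchy-Schwarz
  have hcs : (3*W)^2 ≤ S * (3*(W*A) + 6*M + c^2*(3*(n:ℝ)*M + 6*M) - 2*c*(6*M)) := by
    rw [← hSG, ← hGG, hS]
    have := Finset.sum_mul_sq_le_sq_mul_sq Finset.univ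
      (fun p : Fin n × Fin n × Fin n => s p.1 p.2.1 p.2.2)
      (fun p : Fin n × Fin n × Fin n =>
        (w p.1 * t p.2.1 p.2.2 + w p.2.1 * t p.1 p.2.2 + w p.2.2 * t p.1 p.2.1)
        - c * (dlt p.1 p.2.1 * m p.2.2 + dlt p.1 p.2.2 * m p.2.1
            + dlt p.2.1 p.2.2 * m p.1))
    simpa [Fintype.sum_prod_type] using this
  -- coefficient simplification
  have hne2 : (n:ℝ) + 2 ≠ 0 := by positivity
  have hco : 6 + c^2*(3*(n:ℝ) + 6) - 2*c*6 = 6*(n:ℝ)/((n:ℝ)+2) := by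
    rw [hc]; field_simp; ring
  have hcs2 : 9*W^2 ≤ S * (3*(A*W) + (6*(n:ℝ)/((n:ℝ)+2))*M) := by
    calc 9*W^2 = (3*W)^2 := by ring
      _ ≤ S * (3*(W*A) + 6*M + c^2*(3*(n:ℝ)*M + 6*M) - 2*c*(6*M)) := hcs
      _ = S * (3*(A*W) + (6 + c^2*(3*(n:ℝ) + 6) - 2*c*6)*M) := by ring
      _ = S * (3*(A*W) + (6*(n:ℝ)/((n:ℝ)+2))*M) := by rw [hco]
  -- the eigenvalue bound for m
  have hMb : (n:ℝ)*M ≤ ((n:ℝ)-1)*A*W := opBound hn2 t ht htr w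
  -- combine
  have hkey : 9*W^2 ≤ (9*(n:ℝ)/((n:ℝ)+2)) * (A*S*W) := by
    have h1 : S * ((6*(n:ℝ)/((n:ℝ)+2))*M) ≤ S * ((6/((n:ℝ)+2))*(((n:ℝ)-1)*A*W)) := by
      apply mul_le_mul_of_nonneg_left _ hSpos
      have h2 : (0:ℝ) ≤ 6/((n:ℝ)+2) := by positivity
      have h3 := mul_le_mul_of_nonneg_left hMb h2
      calc (6*(n:ℝ)/((n:ℝ)+2))*M = (6/((n:ℝ)+2)) * ((n:ℝ)*M) := by ring
        _ ≤ (6/((n:ℝ)+2)) * (((n:ℝ)-1)*A*W) := h3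
    have h4 : S * (3*(A*W)) + S * ((6/((n:ℝ)+2))*(((n:ℝ)-1)*A*W))
        = (9*(n:ℝ)/((n:ℝ)+2)) * (A*S*W) := by
      field_simp; ring
    calc 9*W^2 ≤ S * (3*(A*W) + (6*(n:ℝ)/((n:ℝ)+2))*M) := hcs2
      _ = S * (3*(A*W)) + S * ((6*(n:ℝ)/((n:ℝ)+2))*M) := by ring
      _ ≤ S * (3*(A*W)) + S * ((6/((n:ℝ)+2))*(((n:ℝ)-1)*A*W)) := by linarith
      _ = (9*(n:ℝ)/((n:ℝ)+2)) * (A*S*W) := h4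
  -- conclude
  show W ≤ ((n:ℝ)/((n:ℝ)+2)) * A * S
  rcases eq_or_lt_of_le hWpos with hW0 | hW0
  · rw [← hW0]
    exact mul_nonneg (mul_nonneg (div_nonneg hnR.le (by positivity)) hApos) hSpos
  · refine (mul_le_mul_iff_of_pos_right hW0).mp ?_
    have e1 : W * W = (1/9) * (9*W^2) := by ring
    have e2 : ((n:ℝ)/((n:ℝ)+2)) * A * S * W = (1/9)*((9*(n:ℝ)/((n:ℝ)+2)) * (A*S*W)) := by
      ring
    rw [e1, e2]
    linarith
end core


/-- Kato-type inequality for a trace-free symmetric 2-tensor field `T` on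
`ℝⁿ` whose covariant derivative is totally symmetric:
`|∇|T|²|² ≤ (4n/(n+2))·|T|²·|∇T|²`, and consequently
`|∇|T||² ≤ (n/(n+2))·|∇T|²` wherever `T ≠ 0`. -/
theorem kato_type_inequality (n : ℕ) (hn : 1 ≤ n)
    (T : EuclideanSpace ℝ (Fin n) → Matrix (Fin n) (Fin n) ℝ)
    (hsymm : ∀ x i j, T x i j = T x j i)
    (htr : ∀ x, Matrix.trace (T x) = 0)
    (hdiff : ∀ i j, Differentiable ℝ (fun y => T y i j))
    (htot : ∀ x i j k,
      fderiv ℝ (fun y => T y i j) x (EuclideanSpace.single k 1)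
        = fderiv ℝ (fun y => T y k j) x (EuclideanSpace.single i 1))
    (x : EuclideanSpace ℝ (Fin n)) :
    (∑ k, (fderiv ℝ (fun y => ∑ i, ∑ j, (T y i j)^2) x
        (EuclideanSpace.single k 1))^2)
      ≤ (4 * n / (n + 2)) * (∑ i, ∑ j, (T x i j)^2) *
        (∑ k, ∑ i, ∑ j,
          (fderiv ℝ (fun y => T y i j) x (EuclideanSpace.single k 1))^2) ∧
    (0 < ∑ i, ∑ j, (T x i j)^2 →
      (∑ k, (fderiv ℝ (fun y => Real.sqrt (∑ i, ∑ j, (T y i j)^2)) x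
          (EuclideanSpace.single k 1))^2)
        ≤ ((n : ℝ) / (n + 2)) *
          (∑ k, ∑ i, ∑ j,
            (fderiv ℝ (fun y => T y i j) x (EuclideanSpace.single k 1))^2)) := by
  classical
  have hD : ∀ i j, HasFDerivAt (fun y => T y i j)
      (fderiv ℝ (fun y => T y i j) x) x :=
    fun i j => ((hdiff i j) x).hasFDerivAt
  -- abbreviations (plain definitions, no `set`)
  let s : Fin n → Fin n → Fin n → ℝ := fun k i j =>
    fderiv ℝ (fun y => T y i j) x (EuclideanSpace.single k 1)
  let t : Fin n → Fin n → ℝ := fun i j => T x i j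
  let w : Fin n → ℝ := fun k => ∑ i, ∑ j, t i j * s k i j
  -- derivative of the squared norm
  have hsq : ∀ i j, HasFDerivAt (fun y => (T y i j)^2)
      ((2 * T x i j) • fderiv ℝ (fun y => T y i j) x) x := by
    intro i j
    have h := (hD i j).fun_mul (hD i j)
    have e : (2 * T x i j) • fderiv ℝ (fun y => T y i j) x
        = T x i j • fderiv ℝ (fun y => T y i j) x
          + T x i j • fderiv ℝ (fun y => T y i j) x := by
      rw [two_mul, add_smul]
    rw [e]
    simpa [pow_two] using h
  have hSd : HasFDerivAt (fun y => ∑ i, ∑ j, (T y i j)^2)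
      (∑ i, ∑ j, (2 * T x i j) • fderiv ℝ (fun y => T y i j) x) x :=
    HasFDerivAt.fun_sum fun i _ => HasFDerivAt.fun_sum fun j _ => hsq i j
  have happ : ∀ k, fderiv ℝ (fun y => ∑ i, ∑ j, (T y i j)^2) x
      (EuclideanSpace.single k 1)
      = ∑ i, ∑ j, 2 * T x i j
          * fderiv ℝ (fun y => T y i j) x (EuclideanSpace.single k 1) := by
    intro k
    rw [hSd.fderiv]
    simp [ContinuousLinearMap.sum_apply, mul_assoc]
  have happ2 : ∀ k, fderiv ℝ (fun y => ∑ i, ∑ j, (T y i j)^2) x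
      (EuclideanSpace.single k 1) = 2 * w k := by
    intro k
    rw [happ k, Finset.mul_sum]
    refine Finset.sum_congr rfl fun i _ => ?_
    rw [Finset.mul_sum]
    exact Finset.sum_congr rfl fun j _ => by ring
  -- symmetries of s
  have hs1 : ∀ k i j, s k i j = s k j i := by
    intro k i j
    show fderiv ℝ (fun y => T y i j) x _ = fderiv ℝ (fun y => T y j i) x _
    have hfe : (fun y => T y i j) = (fun y => T y j i) :=
      funext fun y => hsymm y i j
    rw [hfe]
  have hs2 : ∀ k i j, s k i j = s i k j := fun k i j => htot x i j k
  -- trace-freeness of s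
  have hstr : ∀ k, ∑ i, s k i i = 0 := by
    intro k
    have hfun : (fun y => ∑ i, T y i i) = fun _ => (0:ℝ) := by
      funext y
      have h1 := htr y
      simpa [Matrix.trace, Matrix.diag] using h1
    have h1 : HasFDerivAt (fun y => ∑ i, T y i i)
        (∑ i, fderiv ℝ (fun y => T y i i) x) x :=
      HasFDerivAt.fun_sum fun i _ => hD i i
    rw [hfun] at h1
    have h2 : (∑ i, fderiv ℝ (fun y => T y i i) x)
        = (0 : EuclideanSpace ℝ (Fin n) →L[ℝ] ℝ) :=
      h1.unique (hasFDerivAt_const 0 x)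
    have h3 : ∑ i, s k i i
        = (∑ i, fderiv ℝ (fun y => T y i i) x) (EuclideanSpace.single k 1) := by
      rw [ContinuousLinearMap.sum_apply]
    rw [h3, h2]
    rfl
  -- trace-freeness of t
  have htt : ∑ i, t i i = 0 := by
    have h1 := htr x
    simpa [Matrix.trace, Matrix.diag] using h1
  have hts : ∀ i j, t i j = t j i := fun i j => hsymm x i j
  -- main algebraic bound
  have hWb : ∑ k, (w k)^2
      ≤ ((n:ℝ)/((n:ℝ)+2)) * (∑ i, ∑ j, (t i j)^2)
          * (∑ k, ∑ i, ∑ j, (s k i j)^2) := by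
    rcases Nat.lt_or_ge n 2 with h2 | h2
    · -- n = 1 : t vanishes
      have hn1 : n = 1 := le_antisymm (Nat.lt_succ_iff.mp h2) hn
      subst hn1
      have ht0 : ∀ i j : Fin 1, t i j = 0 := by
        intro i j
        have h3 : t i j = t 0 0 := by
          rw [Subsingleton.elim i 0, Subsingleton.elim j 0]
        rw [h3]
        have h4 := htr x
        simpa [Matrix.trace, Matrix.diag] using h4
      have hw0 : ∀ k, w k = 0 := by
        intro k
        show ∑ i, ∑ j, t i j * s k i j = 0
        rw [Finset.sum_congr rfl fun i _ => Finset.sum_congr rfl fun j _ => by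
          rw [ht0 i j, zero_mul]]
        simp
      rw [Finset.sum_congr rfl fun k _ => by rw [hw0 k, zero_pow two_ne_zero]]
      have hnn : (0:ℝ) ≤ ((1:ℕ):ℝ)/(((1:ℕ):ℝ)+2)
          * (∑ i, ∑ j, (t i j)^2) * (∑ k, ∑ i, ∑ j, (s k i j)^2) := by
        apply mul_nonneg (mul_nonneg (by positivity) ?_) ?_
        · exact Finset.sum_nonneg fun i _ => Finset.sum_nonneg fun j _ =>
            sq_nonneg _
        · exact Finset.sum_nonneg fun k _ => Finset.sum_nonneg fun i _ =>
            Finset.sum_nonneg fun j _ => sq_nonneg _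
      simpa using hnn
    · exact core h2 t s hts htt hs1 hs2 hstr
  have hApos : 0 ≤ ∑ i, ∑ j, (t i j)^2 :=
    Finset.sum_nonneg fun i _ => Finset.sum_nonneg fun j _ => sq_nonneg _
  have hSpos : 0 ≤ ∑ k, ∑ i, ∑ j, (s k i j)^2 :=
    Finset.sum_nonneg fun k _ => Finset.sum_nonneg fun i _ =>
      Finset.sum_nonneg fun j _ => sq_nonneg _
  constructor
  · -- part 1
    calc ∑ k, (fderiv ℝ (fun y => ∑ i, ∑ j, (T y i j)^2) x
          (EuclideanSpace.single k 1))^2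
        = ∑ k, (2 * w k)^2 :=
          Finset.sum_congr rfl fun k _ => by rw [happ2 k]
      _ = 4 * ∑ k, (w k)^2 := by
          rw [Finset.mul_sum]
          exact Finset.sum_congr rfl fun k _ => by ring
      _ ≤ 4 * (((n:ℝ)/((n:ℝ)+2)) * (∑ i, ∑ j, (t i j)^2)
            * (∑ k, ∑ i, ∑ j, (s k i j)^2)) := by linarith
      _ = (4 * (n:ℝ) / ((n:ℝ) + 2)) * (∑ i, ∑ j, (T x i j)^2) *
          (∑ k, ∑ i, ∑ j,
            (fderiv ℝ (fun y => T y i j) x (EuclideanSpace.single k 1))^2) := by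
          show _ = (4 * (n:ℝ) / ((n:ℝ) + 2)) * (∑ i, ∑ j, (t i j)^2)
            * (∑ k, ∑ i, ∑ j, (s k i j)^2)
          ring
  · -- part 2
    intro hpos
    have hxne : (∑ i, ∑ j, (T x i j)^2) ≠ 0 := ne_of_gt hpos
    set r : ℝ := Real.sqrt (∑ i, ∑ j, (T x i j)^2) with hr
    have hrpos : 0 < r := Real.sqrt_pos.mpr hpos
    have hrne : r ≠ 0 := ne_of_gt hrpos
    have hr2 : r^2 = ∑ i, ∑ j, (T x i j)^2 := Real.sq_sqrt (le_of_lt hpos)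
    have hgd : HasFDerivAt (fun y => Real.sqrt (∑ i, ∑ j, (T y i j)^2))
        ((1/(2*r)) • (∑ i, ∑ j, (2 * T x i j)
          • fderiv ℝ (fun y => T y i j) x)) x := by
      have h := (Real.hasDerivAt_sqrt hxne).comp_hasFDerivAt x hSd
      exact h
    have happ3 : ∀ k, fderiv ℝ (fun y => Real.sqrt (∑ i, ∑ j, (T y i j)^2)) x
        (EuclideanSpace.single k 1) = w k / r := by
      intro k
      rw [hgd.fderiv]
      have h1 : ((1/(2*r)) • (∑ i, ∑ j, (2 * T x i j)
            • fderiv ℝ (fun y => T y i j) x)) (EuclideanSpace.single k 1)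
          = (1/(2*r)) * ((∑ i, ∑ j, (2 * T x i j)
            • fderiv ℝ (fun y => T y i j) x) (EuclideanSpace.single k 1)) := rfl
      rw [h1]
      have h2 : ((∑ i, ∑ j, (2 * T x i j)
            • fderiv ℝ (fun y => T y i j) x) : _ →L[ℝ] ℝ)
            (EuclideanSpace.single k 1)
          = fderiv ℝ (fun y => ∑ i, ∑ j, (T y i j)^2) x
            (EuclideanSpace.single k 1) := by
        rw [hSd.fderiv]
      rw [h2, happ2 k]
      field_simp
    calc ∑ k, (fderiv ℝ (fun y => Real.sqrt (∑ i, ∑ j, (T y i j)^2)) x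
          (EuclideanSpace.single k 1))^2
        = ∑ k, (w k)^2 / r^2 := by
          refine Finset.sum_congr rfl fun k _ => ?_
          rw [happ3 k, div_pow]
      _ = (∑ k, (w k)^2) / (∑ i, ∑ j, (T x i j)^2) := by
          rw [← Finset.sum_div, hr2]
      _ ≤ ((n:ℝ)/((n:ℝ)+2)) * (∑ k, ∑ i, ∑ j, (s k i j)^2) := by
          rw [div_le_iff₀ hpos]
          calc ∑ k, (w k)^2
              ≤ ((n:ℝ)/((n:ℝ)+2)) * (∑ i, ∑ j, (t i j)^2)
                * (∑ k, ∑ i, ∑ j, (s k i j)^2) := hWb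
            _ = ((n:ℝ)/((n:ℝ)+2)) * (∑ k, ∑ i, ∑ j, (s k i j)^2)
                * (∑ i, ∑ j, (T x i j)^2) := by
                show ((n:ℝ)/((n:ℝ)+2)) * (∑ i, ∑ j, (t i j)^2)
                  * (∑ k, ∑ i, ∑ j, (s k i j)^2) = _
                ring
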